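/- There exists a continuous group homomorphism f : lim_{[p]} Kˣ/q^ℤ → Kˣ/q'^ℤ with the following property: for every element (x_n)_{n≥0} of lim_{[p]} Kˣ/q^ℤ and every sequence (x̃_n)_{n≥0} in Kˣ with x̃_n ≡ x_n mod q^ℤ for all n, the sequence of classes (x̃_n^{p^n} mod q'^ℤ) converges to f((x_n)) in Kˣ/q'^ℤ. -/

import Mathlib

open Filter

section TateAux

variable {K : Type*} [NormedField K] [IsUltrametricDist K]

lemma aux_norm_eq_of_sub_lt {a b : K} (h : ‖a - b‖ < ‖b‖) : ‖a‖ = ‖b‖ := by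
  have h1 : ‖a‖ ≤ max ‖a - b‖ ‖b‖ := by
    simpa using IsUltrametricDist.norm_add_le_max (a - b) b
  have h2 : ‖b‖ ≤ max ‖b - a‖ ‖a‖ := by
    simpa using IsUltrametricDist.norm_add_le_max (b - a) a
  rw [norm_sub_rev] at h2
  refine le_antisymm (h1.trans (max_le h.le le_rfl)) ?_
  by_contra hab
  push_neg at hab
  exact absurd h2 (not_le.2 (max_lt h hab))

lemma aux_norm_eq_one {a : K} (h : ‖a - 1‖ < 1) : ‖a‖ = 1 := by
  simpa using aux_norm_eq_of_sub_lt (b := (1 : K)) (by simpa using h)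

lemma aux_mul_sub_one {a b : K} {r s : ℝ} (ha : ‖a‖ ≤ 1) (h1 : ‖a - 1‖ ≤ r)
    (h2 : ‖b - 1‖ ≤ s) : ‖a * b - 1‖ ≤ max r s := by
  have : a * b - 1 = a * (b - 1) + (a - 1) := by ring
  rw [this]
  refine (IsUltrametricDist.norm_add_le_max _ _).trans (max_le ?_ (h1.trans (le_max_left _ _)))
  calc ‖a * (b - 1)‖ = ‖a‖ * ‖b - 1‖ := norm_mul _ _
    _ ≤ 1 * s := mul_le_mul ha h2 (norm_nonneg _) zero_le_one
    _ ≤ max r s := by simpa using le_max_right r s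

lemma aux_pow_nat {a : K} {r : ℝ} (ha : ‖a‖ ≤ 1) (h : ‖a - 1‖ ≤ r) :
    ∀ n : ℕ, ‖a ^ n - 1‖ ≤ r := by
  intro n
  induction n with
  | zero => simpa using le_trans (norm_nonneg _) h
  | succ n ih =>
      rw [pow_succ]
      have hpow : ‖a ^ n‖ ≤ 1 := by
        rw [norm_pow]; exact pow_le_one₀ (norm_nonneg _) ha
      simpa using aux_mul_sub_one hpow ih h

lemma aux_zpow {u : Kˣ} {r : ℝ} (hr : r < 1) (h : ‖(u : K) - 1‖ ≤ r) (k : ℤ) :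
    ‖((u ^ k : Kˣ) : K) - 1‖ ≤ r := by
  have hu1 : ‖(u : K)‖ = 1 := aux_norm_eq_one (lt_of_le_of_lt h hr)
  have hinvnorm : ‖((u⁻¹ : Kˣ) : K)‖ = 1 := by
    rw [Units.val_inv_eq_inv_val, norm_inv, hu1, inv_one]
  have hinv : ‖((u⁻¹ : Kˣ) : K) - 1‖ ≤ r := by
    have heq : ((u⁻¹ : Kˣ) : K) - 1 = ((u⁻¹ : Kˣ) : K) * (1 - (u : K)) := by
      rw [mul_sub, mul_one, Units.inv_mul]
    rw [heq, norm_mul, hinvnorm, one_mul, norm_sub_rev]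
    exact h
  induction k using Int.rec with
  | ofNat n =>
      rw [Int.ofNat_eq_coe, zpow_natCast, Units.val_pow_eq_pow_val]
      exact aux_pow_nat hu1.le h n
  | negSucc n =>
      rw [zpow_negSucc, ← inv_pow, Units.val_pow_eq_pow_val]
      exact aux_pow_nat hinvnorm.le hinv (n + 1)

lemma aux_pow_p {p : ℕ} (hp : p.Prime) {c s : ℝ} (hpc : ‖(p : K)‖ ≤ c) (hc1 : c ≤ 1)
    (hs : s ≤ c) {a : K} (h : ‖a - 1‖ ≤ s) : ‖a ^ p - 1‖ ≤ c * s := by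
  have h0s : 0 ≤ s := le_trans (norm_nonneg _) h
  have h0c : 0 ≤ c := h0s.trans hs
  have hs1 : s ≤ 1 := hs.trans hc1
  have hb : a ^ p = ∑ k ∈ Finset.range (p + 1), (a - 1) ^ k * (p.choose k : K) := by
    conv_lhs => rw [show a = (a - 1) + 1 by ring]
    rw [add_pow]
    simp
  have hkey : a ^ p - 1 = ∑ i ∈ Finset.range p, (a - 1) ^ (i + 1) * (p.choose (i + 1) : K) := by
    rw [hb, Finset.sum_range_succ']
    simp
  rw [hkey]
  refine IsUltrametricDist.norm_sum_le_of_forall_le_of_nonneg (mul_nonneg h0c h0s) ?_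
  intro i hi
  rw [Finset.mem_range] at hi
  rw [norm_mul, norm_pow]
  have hti : ‖a - 1‖ ^ (i + 1) ≤ s := by
    calc ‖a - 1‖ ^ (i + 1) ≤ s ^ (i + 1) := pow_le_pow_left₀ (norm_nonneg _) h _
      _ ≤ s := pow_le_of_le_one h0s hs1 (Nat.succ_ne_zero i)
  rcases eq_or_lt_of_le (Nat.succ_le_of_lt hi) with hip | hip
  · rw [show i + 1 = p from hip, Nat.choose_self]
    simp only [Nat.cast_one, norm_one, mul_one]
    calc ‖a - 1‖ ^ p = ‖a - 1‖ ^ (p - 1) * ‖a - 1‖ := by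
          rw [← pow_succ]; congr 1; have := hp.two_le; omega
      _ ≤ c * s := by
          refine mul_le_mul ?_ h (norm_nonneg _) h0c
          calc ‖a - 1‖ ^ (p - 1) ≤ s ^ (p - 1) := pow_le_pow_left₀ (norm_nonneg _) h _
            _ ≤ s := pow_le_of_le_one h0s hs1 (by have := hp.two_le; omega)
            _ ≤ c := hs
  · obtain ⟨m, hm⟩ := hp.dvd_choose_self (Nat.succ_ne_zero i) hip
    have hC : ‖(p.choose (i + 1) : K)‖ ≤ c := by
      rw [hm]
      push_cast
      rw [norm_mul]
      calc ‖(p : K)‖ * ‖(m : K)‖ ≤ c * 1 :=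
            mul_le_mul hpc (IsUltrametricDist.norm_natCast_le_one K m) (norm_nonneg _) h0c
        _ = c := mul_one c
    calc ‖a - 1‖ ^ (i + 1) * ‖(p.choose (i + 1) : K)‖ ≤ s * c :=
          mul_le_mul hti hC (norm_nonneg _) h0s
      _ = c * s := mul_comm _ _

lemma aux_omega {p : ℕ} (hp : p.Prime) {c : ℝ} (hc : c < 1) {ζ : Kˣ}
    (hζ : ‖(ζ : K) - 1‖ ≤ c) (hpc : ‖(p : K)‖ ≤ c) :
    ∀ (n : ℕ) (k : ℤ), ‖(((ζ ^ p ^ n) ^ k : Kˣ) : K) - 1‖ ≤ c ^ (n + 1) := by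
  have h0c : 0 ≤ c := le_trans (norm_nonneg _) hpc
  have hbase : ∀ n : ℕ, ‖((ζ ^ p ^ n : Kˣ) : K) - 1‖ ≤ c ^ (n + 1) := by
    intro n
    induction n with
    | zero => simpa using hζ
    | succ n ih =>
        have hstep : (ζ ^ p ^ (n + 1) : Kˣ) = (ζ ^ p ^ n) ^ p := by
          rw [← pow_mul, ← pow_succ]
        rw [hstep, Units.val_pow_eq_pow_val]
        have hsc : c ^ (n + 1) ≤ c := pow_le_of_le_one h0c hc.le (Nat.succ_ne_zero n)
        calc ‖((ζ ^ p ^ n : Kˣ) : K) ^ p - 1‖ ≤ c * c ^ (n + 1) :=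
              aux_pow_p hp hpc hc.le hsc ih
          _ = c ^ (n + 2) := by ring
  intro n k
  have hlt : c ^ (n + 1) < 1 :=
    lt_of_le_of_lt (pow_le_of_le_one h0c hc.le (Nat.succ_ne_zero n)) hc
  exact aux_zpow hlt (hbase n) k

lemma aux_pow_zpow_comm {G : Type*} [Group G] (a : G) (m : ℤ) (b : ℕ) :
    (a ^ m) ^ b = (a ^ b) ^ m := by
  rw [← zpow_natCast (a ^ m), ← zpow_mul, mul_comm, zpow_mul, zpow_natCast]

lemma aux_key [CompleteSpace K]
    {p : ℕ} (hp : p.Prime) {c : ℝ} (hc : c < 1) {q q' ζ : Kˣ}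
    (hqf : q = q' * ζ) (hζ : ‖(ζ : K) - 1‖ ≤ c) (hpc : ‖(p : K)‖ ≤ c)
    (xt : ℕ → Kˣ) (hrel : ∀ n, ∃ k : ℤ, xt (n + 1) ^ p = xt n * q ^ k) :
    ∃ v : Kˣ, Filter.Tendsto
        (fun n => (QuotientGroup.mk (xt n ^ p ^ n) : Kˣ ⧸ Subgroup.zpowers q'))
        Filter.atTop (nhds (QuotientGroup.mk v)) ∧
      ‖(v : K) - (xt 0 : K)‖ ≤ ‖(xt 0 : K)‖ * c := by
  have h0c : 0 ≤ c := le_trans (norm_nonneg _) hpc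
  have hω := aux_omega hp hc hζ hpc
  have hcn : ∀ n : ℕ, c ^ (n + 1) ≤ c := fun n => pow_le_of_le_one h0c hc.le (Nat.succ_ne_zero n)
  choose k hk using hrel
  set w : ℕ → Kˣ := fun n => Nat.rec (xt 0) (fun n wn => wn * (ζ ^ p ^ n) ^ (k n)) n with hwdef
  have hw0 : w 0 = xt 0 := rfl
  have hwsucc : ∀ n, w (n + 1) = w n * (ζ ^ p ^ n) ^ (k n) := fun n => rfl
  have hξ : ∀ n, ‖(((ζ ^ p ^ n) ^ k n : Kˣ) : K) - 1‖ ≤ c ^ (n + 1) := fun n => hω n (k n)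
  have hξ1 : ∀ n, ‖(((ζ ^ p ^ n) ^ k n : Kˣ) : K)‖ = 1 := fun n =>
    aux_norm_eq_one (lt_of_le_of_lt (hξ n) (lt_of_le_of_lt (hcn n) hc))
  have hmk : ∀ n, (QuotientGroup.mk (xt n ^ p ^ n) : Kˣ ⧸ Subgroup.zpowers q')
      = QuotientGroup.mk (w n) := by
    intro n
    induction n with
    | zero => simp [hw0]
    | succ n ih =>
        have e1 : xt (n + 1) ^ p ^ (n + 1)
            = xt n ^ p ^ n * ((q' ^ k n) ^ p ^ n * (ζ ^ p ^ n) ^ k n) := by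
          rw [pow_succ', pow_mul, hk n, hqf, mul_zpow, mul_pow, mul_pow,
            aux_pow_zpow_comm ζ (k n) (p ^ n)]
        have this2 : (QuotientGroup.mk ((q' ^ k n) ^ p ^ n * (ζ ^ p ^ n) ^ k n) :
            Kˣ ⧸ Subgroup.zpowers q') = QuotientGroup.mk ((ζ ^ p ^ n) ^ k n) := by
          rw [QuotientGroup.eq_iff_div_mem]
          simpa using Subgroup.pow_mem _ (Subgroup.zpow_mem _ (Subgroup.mem_zpowers q') _) _
        rw [e1, QuotientGroup.mk_mul, ih, this2, hwsucc n, QuotientGroup.mk_mul]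
  have hwnorm : ∀ n, ‖(w n : K)‖ = ‖(xt 0 : K)‖ := by
    intro n
    induction n with
    | zero => rw [hw0]
    | succ n ih => rw [hwsucc n, Units.val_mul, norm_mul, hξ1 n, mul_one, ih]
  have hdist : ∀ n, dist ((w n : K)) ((w (n + 1) : K)) ≤ ‖(xt 0 : K)‖ * c * c ^ n := by
    intro n
    rw [dist_eq_norm]
    have : (w n : K) - (w (n + 1) : K) = (w n : K) * (1 - (((ζ ^ p ^ n) ^ k n : Kˣ) : K)) := by
      rw [hwsucc n, Units.val_mul]; ring
    rw [this, norm_mul, hwnorm n, norm_sub_rev]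
    calc ‖(xt 0 : K)‖ * ‖(((ζ ^ p ^ n) ^ k n : Kˣ) : K) - 1‖
        ≤ ‖(xt 0 : K)‖ * c ^ (n + 1) :=
          mul_le_mul_of_nonneg_left (hξ n) (norm_nonneg _)
      _ = ‖(xt 0 : K)‖ * c * c ^ n := by ring
  have hcauchy : CauchySeq (fun n => (w n : K)) :=
    cauchySeq_of_le_geometric c (‖(xt 0 : K)‖ * c) hc hdist
  obtain ⟨L, hL⟩ := cauchySeq_tendsto_of_complete hcauchy
  have hLnorm : ‖L‖ = ‖(xt 0 : K)‖ :=
    tendsto_nhds_unique hL.norm ((tendsto_congr hwnorm).2 tendsto_const_nhds)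
  have hL0 : L ≠ 0 := by
    rw [← norm_ne_zero_iff, hLnorm, norm_ne_zero_iff]
    exact Units.ne_zero _
  refine ⟨Units.mk0 L hL0, ?_, ?_⟩
  · have hwv : Tendsto w atTop (nhds (Units.mk0 L hL0)) := by
      rw [Units.isEmbedding_val₀.isInducing.tendsto_nhds_iff]
      simpa [Function.comp_def] using hL
    have htend : Tendsto (fun n => (QuotientGroup.mk (w n) : Kˣ ⧸ Subgroup.zpowers q'))
        atTop (nhds (QuotientGroup.mk (Units.mk0 L hL0))) :=
      (QuotientGroup.continuous_mk.tendsto _).comp hwv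
    exact (tendsto_congr hmk).2 htend
  · have hbound : ∀ n, ‖(w n : K) - (xt 0 : K)‖ ≤ ‖(xt 0 : K)‖ * c := by
      intro n
      induction n with
      | zero => rw [hw0]; simpa using h0c
      | succ n ih =>
          have e : (w (n + 1) : K) - (xt 0 : K)
              = ((w (n + 1) : K) - (w n : K)) + ((w n : K) - (xt 0 : K)) := by ring
          rw [e]
          refine (IsUltrametricDist.norm_add_le_max _ _).trans (max_le ?_ ih)
          have : (w (n + 1) : K) - (w n : K)
              = (w n : K) * ((((ζ ^ p ^ n) ^ k n : Kˣ) : K) - 1) := by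
            rw [hwsucc n, Units.val_mul]; ring
          rw [this, norm_mul, hwnorm n]
          calc ‖(xt 0 : K)‖ * ‖(((ζ ^ p ^ n) ^ k n : Kˣ) : K) - 1‖
              ≤ ‖(xt 0 : K)‖ * c ^ (n + 1) := mul_le_mul_of_nonneg_left (hξ n) (norm_nonneg _)
            _ ≤ ‖(xt 0 : K)‖ * c := mul_le_mul_of_nonneg_left (hcn n) (norm_nonneg _)
    have htn : Tendsto (fun n => ‖(w n : K) - (xt 0 : K)‖) atTop
        (nhds ‖L - (xt 0 : K)‖) := (hL.sub tendsto_const_nhds).norm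
    simpa using le_of_tendsto htn (Filter.Eventually.of_forall hbound)

lemma aux_cmp {p : ℕ} (hp : p.Prime) {c : ℝ} (hc : c < 1) {q q' ζ : Kˣ}
    (hqf : q = q' * ζ) (hζ : ‖(ζ : K) - 1‖ ≤ c) (hpc : ‖(p : K)‖ ≤ c)
    (E : ℕ → ℕ) (hE : ∀ n, n ≤ E n) (s t : ℕ → Kˣ)
    (hst : ∀ n, (QuotientGroup.mk (s n) : Kˣ ⧸ Subgroup.zpowers q) = QuotientGroup.mk (t n))
    (A : Kˣ ⧸ Subgroup.zpowers q')
    (hA : Filter.Tendsto (fun n => (QuotientGroup.mk (t n ^ p ^ E n) :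
        Kˣ ⧸ Subgroup.zpowers q')) Filter.atTop (nhds A)) :
    Filter.Tendsto (fun n => (QuotientGroup.mk (s n ^ p ^ E n) :
        Kˣ ⧸ Subgroup.zpowers q')) Filter.atTop (nhds A) := by
  have h0c : 0 ≤ c := le_trans (norm_nonneg _) hpc
  have hω := aux_omega hp hc hζ hpc
  have hm' : ∀ n, ∃ m : ℤ, s n = t n * q ^ m := by
    intro n
    obtain ⟨m, hmm⟩ := Subgroup.mem_zpowers_iff.1 ((QuotientGroup.eq_iff_div_mem).1 (hst n))
    exact ⟨m, by rw [hmm, mul_div_cancel]⟩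
  choose m hm using hm'
  have hdec : ∀ n, (QuotientGroup.mk (s n ^ p ^ E n) : Kˣ ⧸ Subgroup.zpowers q')
      = QuotientGroup.mk (t n ^ p ^ E n) * QuotientGroup.mk ((ζ ^ p ^ E n) ^ m n) := by
    intro n
    have e1 : s n ^ p ^ E n
        = t n ^ p ^ E n * ((q' ^ m n) ^ p ^ E n * (ζ ^ p ^ E n) ^ m n) := by
      rw [hm n, hqf, mul_zpow, mul_pow, mul_pow, aux_pow_zpow_comm ζ (m n) (p ^ E n)]
    have this2 : (QuotientGroup.mk ((q' ^ m n) ^ p ^ E n * (ζ ^ p ^ E n) ^ m n) :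
        Kˣ ⧸ Subgroup.zpowers q') = QuotientGroup.mk ((ζ ^ p ^ E n) ^ m n) := by
      rw [QuotientGroup.eq_iff_div_mem]
      simpa using Subgroup.pow_mem _ (Subgroup.zpow_mem _ (Subgroup.mem_zpowers q') _) _
    rw [e1, QuotientGroup.mk_mul, this2]
  have hξK : Filter.Tendsto (fun n => (((ζ ^ p ^ E n) ^ m n : Kˣ) : K))
      Filter.atTop (nhds 1) := by
    rw [tendsto_iff_norm_sub_tendsto_zero]
    refine squeeze_zero (g := fun n => c ^ (n + 1)) (fun n => norm_nonneg _) (fun n => ?_) ?_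
    · exact (hω (E n) (m n)).trans
        (pow_le_pow_of_le_one h0c hc.le (by have := hE n; omega))
    · exact (tendsto_pow_atTop_nhds_zero_of_lt_one h0c hc).comp (tendsto_add_atTop_nat 1)
  have hξU : Filter.Tendsto (fun n => ((ζ ^ p ^ E n) ^ m n : Kˣ)) Filter.atTop (nhds 1) := by
    rw [Units.isEmbedding_val₀.isInducing.tendsto_nhds_iff]
    simp only [Function.comp_def, Units.val_one]
    exact hξK
  have hξQ : Filter.Tendsto (fun n =>
      (QuotientGroup.mk ((ζ ^ p ^ E n) ^ m n : Kˣ) : Kˣ ⧸ Subgroup.zpowers q'))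
      Filter.atTop (nhds 1) := by
    have h1 : Filter.Tendsto (fun u : Kˣ => (QuotientGroup.mk u : Kˣ ⧸ Subgroup.zpowers q'))
        (nhds 1) (nhds (QuotientGroup.mk (1 : Kˣ))) := QuotientGroup.continuous_mk.tendsto 1
    have h2 := h1.comp hξU
    simpa only [QuotientGroup.mk_one, Function.comp_def] using h2
  have hmul := hA.mul hξQ
  refine (tendsto_congr hdec).2 ?_
  convert hmul using 2
  exact (mul_one A).symm

lemma aux_zpowers_closed {q' : Kˣ} (hq' : ‖(q' : K)‖ < 1) :
    IsClosed ((Subgroup.zpowers q' : Subgroup Kˣ) : Set Kˣ) := by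
  rw [← isOpen_compl_iff, isOpen_iff_mem_nhds]
  intro u hu
  have hvalc : Continuous (Units.val : Kˣ → K) := Units.isEmbedding_val₀.continuous
  have h0u : (0 : ℝ) < ‖(u : K)‖ := norm_pos_iff.2 (Units.ne_zero u)
  have hq0 : (0 : ℝ) < ‖(q' : K)‖ := norm_pos_iff.2 (Units.ne_zero q')
  have hq1 : ‖(q' : K)‖ ≠ 1 := ne_of_lt hq'
  have hnormpow : ∀ (v : Kˣ) (k : ℤ), v = q' ^ k → ‖(v : K)‖ = ‖(q' : K)‖ ^ k := by
    intro v k hk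
    rw [hk, Units.val_zpow_eq_zpow_val, norm_zpow]
  by_cases hex : ∃ k : ℤ, ‖(q' : K)‖ ^ k = ‖(u : K)‖
  · obtain ⟨k0, hk0⟩ := hex
    have hne : (u : K) ≠ ((q' ^ k0 : Kˣ) : K) := by
      intro hcon
      exact hu (Subgroup.mem_zpowers_iff.2 ⟨k0, (Units.ext hcon).symm⟩)
    have hδ0 : 0 < min ‖(u : K)‖ ‖(u : K) - ((q' ^ k0 : Kˣ) : K)‖ :=
      lt_min h0u (norm_pos_iff.2 (sub_ne_zero.2 hne))
    refine Filter.mem_of_superset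
      (hvalc.continuousAt.preimage_mem_nhds (Metric.ball_mem_nhds _ hδ0)) ?_
    intro v hv hvS
    obtain ⟨k, hk⟩ := Subgroup.mem_zpowers_iff.1 hvS
    have hdist : ‖(v : K) - (u : K)‖ < min ‖(u : K)‖ ‖(u : K) - ((q' ^ k0 : Kˣ) : K)‖ := by
      simpa [dist_eq_norm] using hv
    have hnv : ‖(v : K)‖ = ‖(u : K)‖ :=
      aux_norm_eq_of_sub_lt (lt_of_lt_of_le hdist (min_le_left _ _))
    have hkk : k = k0 := by
      refine zpow_right_injective₀ hq0 hq1 ?_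
      show ‖(q' : K)‖ ^ k = ‖(q' : K)‖ ^ k0
      rw [hk0, ← hnv, hnormpow v k hk.symm]
    rw [hkk] at hk
    have heq : ‖(v : K) - (u : K)‖ = ‖(u : K) - ((q' ^ k0 : Kˣ) : K)‖ := by
      rw [← hk, norm_sub_rev]
    exact absurd hdist (by rw [heq]; exact not_lt.2 (min_le_right _ _))
  · refine Filter.mem_of_superset
      (hvalc.continuousAt.preimage_mem_nhds (Metric.ball_mem_nhds _ h0u)) ?_
    intro v hv hvS
    obtain ⟨k, hk⟩ := Subgroup.mem_zpowers_iff.1 hvS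
    have hdist : ‖(v : K) - (u : K)‖ < ‖(u : K)‖ := by simpa [dist_eq_norm] using hv
    have hnv : ‖(v : K)‖ = ‖(u : K)‖ := aux_norm_eq_of_sub_lt hdist
    exact hex ⟨k, by rw [← hnormpow v k hk.symm, hnv]⟩

end TateAux

/-- The `p`-adic universal cover `lim_{[p]} Kˣ/u^ℤ` of the Tate curve `Kˣ/u^ℤ`:
the topological group of sequences `(xₙ)` in `Kˣ/u^ℤ` with `xₙ = x_{n+1}^p`,
topologized as a subgroup of the countable product. -/
def padicUniversalCover (K : Type*) [NormedField K] (p : ℕ) (u : Kˣ) :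
    Subgroup (∀ _ : ℕ, Kˣ ⧸ Subgroup.zpowers u) where
  carrier := {x | ∀ n : ℕ, x n = x (n + 1) ^ p}
  one_mem' := by intro n; simp
  mul_mem' := by
    intro a b ha hb n
    simp only [Pi.mul_apply]
    rw [ha n, hb n]
    exact (mul_pow (a (n + 1)) (b (n + 1)) p).symm
  inv_mem' := by
    intro a ha n
    simp only [Pi.inv_apply]
    rw [ha n]
    exact (inv_pow (a (n + 1)) p).symm

/-- There is a continuous group homomorphism `lim_{[p]} Kˣ/q^ℤ → Kˣ/q'^ℤ` sending a
compatible sequence `(xₙ)` to the limit of `x̃ₙ^{pⁿ} mod q'^ℤ`, for any choice of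
lifts `x̃ₙ ∈ Kˣ` of the `xₙ`. -/
theorem exists_continuous_hom_padicUniversalCover
    (K : Type*) [NormedField K] [CompleteSpace K]
    (hu : ∀ a b : K, ‖a + b‖ ≤ max ‖a‖ ‖b‖)
    (p : ℕ) (hp : p.Prime) (hpK : ‖(p : K)‖ < 1)
    (q' : Kˣ) (hq' : ‖(q' : K)‖ < 1)
    (z : K) (hz : ‖z - 1‖ < 1)
    (q : Kˣ) (hq : (q : K) = (q' : K) * z) :
    ∃ f : padicUniversalCover K p q →* Kˣ ⧸ Subgroup.zpowers q',
      Continuous f ∧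
      ∀ (x : padicUniversalCover K p q) (xt : ℕ → Kˣ),
        (∀ n : ℕ, (QuotientGroup.mk (xt n) : Kˣ ⧸ Subgroup.zpowers q) = x.1 n) →
        Filter.Tendsto
          (fun n : ℕ => (QuotientGroup.mk (xt n ^ p ^ n) : Kˣ ⧸ Subgroup.zpowers q'))
          Filter.atTop (nhds (f x)) := by
  haveI : IsUltrametricDist K :=
    IsUltrametricDist.isUltrametricDist_of_forall_norm_add_le_max_norm hu
  -- the contraction constant
  set c : ℝ := max (max ‖(p : K)‖ ‖z - 1‖) (1 / 2) with hcdef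
  have hc : c < 1 := by
    apply max_lt (max_lt hpK hz); norm_num
  have hpc : ‖(p : K)‖ ≤ c := (le_max_left _ _).trans (le_max_left _ _)
  have hzc : ‖z - 1‖ ≤ c := (le_max_right _ _).trans (le_max_left _ _)
  have hhalf : (1 : ℝ) / 2 ≤ c := le_max_right _ _
  have h0c : 0 ≤ c := le_trans (norm_nonneg _) hpc
  -- the unit ζ with value z
  set ζ : Kˣ := q'⁻¹ * q with hζdef
  have hζval : (ζ : K) = z := by
    rw [hζdef, Units.val_mul, Units.val_inv_eq_inv_val, hq]
    field_simp
  have hqf : q = q' * ζ := by rw [hζdef]; group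
  have hζc : ‖(ζ : K) - 1‖ ≤ c := by rw [hζval]; exact hzc
  -- the quotient is T2
  haveI : IsClosed ((Subgroup.zpowers q' : Subgroup Kˣ) : Set Kˣ) := aux_zpowers_closed hq'
  haveI : T3Space (Kˣ ⧸ Subgroup.zpowers q') := QuotientGroup.instT3Space _
  -- the compatibility relation on lifts
  have hdivmem : ∀ a b : Kˣ,
      (QuotientGroup.mk a : Kˣ ⧸ Subgroup.zpowers q) = QuotientGroup.mk b →
      ∃ k : ℤ, a = b * q ^ k := by
    intro a b hab
    obtain ⟨k, hk⟩ := Subgroup.mem_zpowers_iff.1 ((QuotientGroup.eq_iff_div_mem).1 hab)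
    exact ⟨k, by rw [hk, mul_div_cancel]⟩
  have hrelmk : ∀ (x : padicUniversalCover K p q) (xt : ℕ → Kˣ),
      (∀ n, (QuotientGroup.mk (xt n) : Kˣ ⧸ Subgroup.zpowers q) = x.1 n) →
      ∀ n, ∃ k : ℤ, xt (n + 1) ^ p = xt n * q ^ k := by
    intro x xt hxt n
    have hx : ∀ m : ℕ, x.1 m = x.1 (m + 1) ^ p := x.2
    refine hdivmem _ _ ?_
    have : (QuotientGroup.mk (xt (n + 1) ^ p) : Kˣ ⧸ Subgroup.zpowers q)
        = (QuotientGroup.mk (xt (n + 1)) : Kˣ ⧸ Subgroup.zpowers q) ^ p :=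
      QuotientGroup.mk_pow _ _ _
    rw [this, hxt (n + 1), ← hx n, ← hxt n]
  -- canonical lifts and the limit map `F`
  have houteq : ∀ (a : Kˣ ⧸ Subgroup.zpowers q),
      (QuotientGroup.mk (Quotient.out a) : Kˣ ⧸ Subgroup.zpowers q) = a :=
    fun a => Quotient.out_eq' a
  have hkey : ∀ x : padicUniversalCover K p q, ∃ v : Kˣ,
      Filter.Tendsto (fun n => (QuotientGroup.mk ((Quotient.out (x.1 n)) ^ p ^ n) :
        Kˣ ⧸ Subgroup.zpowers q')) Filter.atTop (nhds (QuotientGroup.mk v)) :=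
    fun x => (aux_key hp hc hqf hζc hpc _
      (hrelmk x _ (fun n => houteq (x.1 n)))).imp (fun _ hv => hv.1)
  choose V hV using hkey
  set F : padicUniversalCover K p q → Kˣ ⧸ Subgroup.zpowers q' :=
    fun x => QuotientGroup.mk (V x) with hFdef
  -- the universal convergence property
  have huniv : ∀ (x : padicUniversalCover K p q) (xt : ℕ → Kˣ),
      (∀ n, (QuotientGroup.mk (xt n) : Kˣ ⧸ Subgroup.zpowers q) = x.1 n) →
      Filter.Tendsto (fun n => (QuotientGroup.mk (xt n ^ p ^ n) : Kˣ ⧸ Subgroup.zpowers q'))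
        Filter.atTop (nhds (F x)) := by
    intro x xt hxt
    refine aux_cmp hp hc hqf hζc hpc (fun n => n) (fun n => le_rfl) xt
      (fun n => Quotient.out (x.1 n)) ?_ (F x) (hV x)
    intro n
    rw [hxt n, houteq (x.1 n)]
  -- `F` is multiplicative
  have hone : F 1 = 1 := by
    have h1 := huniv 1 (fun _ => 1) (by
      intro n
      have : ((1 : padicUniversalCover K p q) : ∀ _ : ℕ, Kˣ ⧸ Subgroup.zpowers q) n = 1 := by
        simp
      rw [this]
      simp)
    have h2 : Filter.Tendsto
        (fun n : ℕ => (QuotientGroup.mk ((1 : Kˣ) ^ p ^ n) : Kˣ ⧸ Subgroup.zpowers q'))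
        Filter.atTop (nhds 1) := by
      simpa using (tendsto_const_nhds :
        Filter.Tendsto (fun _ : ℕ => (1 : Kˣ ⧸ Subgroup.zpowers q')) Filter.atTop (nhds 1))
    exact tendsto_nhds_unique h1 h2
  have hmul : ∀ x y : padicUniversalCover K p q, F (x * y) = F x * F y := by
    intro x y
    have hxm := huniv x (fun n => Quotient.out (x.1 n)) (fun n => houteq (x.1 n))
    have hym := huniv y (fun n => Quotient.out (y.1 n)) (fun n => houteq (y.1 n))
    have hxy : ∀ n, (QuotientGroup.mk ((Quotient.out (x.1 n)) * (Quotient.out (y.1 n))) :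
        Kˣ ⧸ Subgroup.zpowers q) = (x * y).1 n := by
      intro n
      rw [QuotientGroup.mk_mul, houteq (x.1 n), houteq (y.1 n)]
      rfl
    have h1 := huniv (x * y) _ hxy
    have h2 : Filter.Tendsto (fun n =>
        (QuotientGroup.mk ((Quotient.out (x.1 n) * Quotient.out (y.1 n)) ^ p ^ n) :
          Kˣ ⧸ Subgroup.zpowers q')) Filter.atTop (nhds (F x * F y)) := by
      refine (tendsto_congr ?_).2 (hxm.mul hym)
      intro n
      rw [mul_pow, QuotientGroup.mk_mul]
    exact tendsto_nhds_unique h1 h2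
  refine ⟨{ toFun := F, map_one' := hone, map_mul' := hmul }, ?_, ?_⟩
  · -- continuity
    set f : padicUniversalCover K p q →* Kˣ ⧸ Subgroup.zpowers q' :=
      { toFun := F, map_one' := hone, map_mul' := hmul } with hfdef
    show Continuous f
    apply continuous_of_continuousAt_one f
    rw [ContinuousAt, map_one, Filter.tendsto_def]
    intro W hW
    -- pull back to a metric ball in `Kˣ`
    have hWK : (fun u : Kˣ => (QuotientGroup.mk u : Kˣ ⧸ Subgroup.zpowers q')) ⁻¹' W
        ∈ nhds (1 : Kˣ) := by
      refine QuotientGroup.continuous_mk.continuousAt.preimage_mem_nhds ?_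
      rwa [QuotientGroup.mk_one]
    rw [Units.isEmbedding_val₀.isInducing.nhds_eq_comap, Filter.mem_comap] at hWK
    obtain ⟨Sk, hSk, hsub⟩ := hWK
    obtain ⟨ε, hε0, hballK⟩ := Metric.mem_nhds_iff.1 hSk
    obtain ⟨N, hN⟩ := exists_pow_lt_of_lt_one hε0 hc
    -- a neighborhood of 1 in the cover
    have hevalcont : Continuous (fun x : padicUniversalCover K p q => x.1 N) :=
      (continuous_apply N).comp continuous_subtype_val
    have hBopen : IsOpen (QuotientGroup.mk '' (Units.val ⁻¹' Metric.ball (1 : K) (1 / 2)) :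
        Set (Kˣ ⧸ Subgroup.zpowers q)) :=
      QuotientGroup.isOpenMap_coe _
        (Units.isEmbedding_val₀.continuous.isOpen_preimage _ Metric.isOpen_ball)
    have hmem1 : (1 : padicUniversalCover K p q).1 N
        ∈ (QuotientGroup.mk '' (Units.val ⁻¹' Metric.ball (1 : K) (1 / 2)) :
          Set (Kˣ ⧸ Subgroup.zpowers q)) := by
      refine ⟨1, ?_, ?_⟩
      · simp only [Set.mem_preimage, Units.val_one]
        exact Metric.mem_ball_self (by norm_num)
      · have : ((1 : padicUniversalCover K p q) : ∀ _ : ℕ, Kˣ ⧸ Subgroup.zpowers q) N = 1 := by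
          simp
        rw [this]
        simp
    have hU : (fun x : padicUniversalCover K p q => x.1 N) ⁻¹'
        (QuotientGroup.mk '' (Units.val ⁻¹' Metric.ball (1 : K) (1 / 2))) ∈
        nhds (1 : padicUniversalCover K p q) :=
      hevalcont.continuousAt.preimage_mem_nhds (hBopen.mem_nhds hmem1)
    refine Filter.mem_of_superset hU ?_
    rintro x ⟨t, ht, hmkt⟩
    have ht' : ‖(t : K) - 1‖ < 1 / 2 := by
      simpa [dist_eq_norm] using ht
    have htn : ‖(t : K)‖ = 1 := aux_norm_eq_one (ht'.trans_le (by norm_num))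
    -- shifted lift sequence
    set yt : ℕ → Kˣ := fun n => if n = 0 then t else Quotient.out (x.1 (n + N)) with hytdef
    have hyt : ∀ n, (QuotientGroup.mk (yt n) : Kˣ ⧸ Subgroup.zpowers q) = x.1 (n + N) := by
      intro n
      cases n with
      | zero => simpa [hytdef] using hmkt
      | succ n => simp only [hytdef, Nat.succ_ne_zero, if_false]; exact houteq _
    have hrely : ∀ n, ∃ k : ℤ, yt (n + 1) ^ p = yt n * q ^ k := by
      intro n
      have hx : ∀ m : ℕ, x.1 m = x.1 (m + 1) ^ p := x.2
      refine hdivmem _ _ ?_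
      have h1 : (QuotientGroup.mk (yt (n + 1) ^ p) : Kˣ ⧸ Subgroup.zpowers q)
          = (QuotientGroup.mk (yt (n + 1)) : Kˣ ⧸ Subgroup.zpowers q) ^ p :=
        QuotientGroup.mk_pow _ _ _
      have e3 : n + 1 + N = n + N + 1 := by omega
      rw [h1, hyt (n + 1), e3, hyt n, hx (n + N)]
    obtain ⟨v, hvt, hvb⟩ := aux_key hp hc hqf hζc hpc yt hrely
    -- norm estimates for v
    have hyt0 : yt 0 = t := by simp [hytdef]
    have hv1 : ‖(v : K) - 1‖ ≤ c := by
      have e : (v : K) - 1 = ((v : K) - (t : K)) + ((t : K) - 1) := by ring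
      rw [e]
      refine (IsUltrametricDist.norm_add_le_max _ _).trans (max_le ?_ ?_)
      · have := hvb
        rw [hyt0] at this
        calc ‖(v : K) - (t : K)‖ ≤ ‖(t : K)‖ * c := this
          _ = c := by rw [htn, one_mul]
      · exact ht'.le.trans hhalf
    have hvpow : ∀ j : ℕ, ‖((v ^ p ^ j : Kˣ) : K) - 1‖ ≤ c ^ j * c := by
      intro j
      induction j with
      | zero => simpa using hv1
      | succ j ih =>
          have hstep : (v ^ p ^ (j + 1) : Kˣ) = (v ^ p ^ j) ^ p := by
            rw [← pow_mul, ← pow_succ]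
          rw [hstep, Units.val_pow_eq_pow_val]
          have hsle : c ^ j * c ≤ c := by
            calc c ^ j * c ≤ 1 * c :=
                  mul_le_mul_of_nonneg_right (pow_le_one₀ h0c hc.le) h0c
              _ = c := one_mul c
          calc ‖((v ^ p ^ j : Kˣ) : K) ^ p - 1‖ ≤ c * (c ^ j * c) :=
                aux_pow_p hp hpc hc.le hsle ih
            _ = c ^ (j + 1) * c := by ring
    -- identify F x with mk (v ^ p ^ N)
    have hsub1 : Filter.Tendsto (fun n => (QuotientGroup.mk (yt n ^ p ^ (n + N)) :
        Kˣ ⧸ Subgroup.zpowers q')) Filter.atTop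
        (nhds (QuotientGroup.mk (v ^ p ^ N))) := by
      have hpow := hvt.pow (p ^ N)
      refine (tendsto_congr ?_).2 (by
        have e2 : (QuotientGroup.mk v : Kˣ ⧸ Subgroup.zpowers q') ^ p ^ N
            = QuotientGroup.mk (v ^ p ^ N) := (QuotientGroup.mk_pow _ _ _).symm
        rw [← e2]
        exact hpow)
      intro n
      rw [pow_add, pow_mul, QuotientGroup.mk_pow]
    have hsub2 : Filter.Tendsto (fun n => (QuotientGroup.mk
        ((Quotient.out (x.1 (n + N))) ^ p ^ (n + N)) : Kˣ ⧸ Subgroup.zpowers q'))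
        Filter.atTop (nhds (QuotientGroup.mk (v ^ p ^ N))) := by
      refine aux_cmp hp hc hqf hζc hpc (fun n => n + N) (fun n => Nat.le_add_right n N)
        _ yt ?_ _ hsub1
      intro n
      rw [houteq (x.1 (n + N)), ← hyt n]
    have hsub3 : Filter.Tendsto (fun n => (QuotientGroup.mk
        ((Quotient.out (x.1 (n + N))) ^ p ^ (n + N)) : Kˣ ⧸ Subgroup.zpowers q'))
        Filter.atTop (nhds (F x)) := (hV x).comp (tendsto_add_atTop_nat N)
    have hFx : F x = QuotientGroup.mk (v ^ p ^ N) := tendsto_nhds_unique hsub3 hsub2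
    -- conclude
    show x ∈ f ⁻¹' W
    have hmemW : QuotientGroup.mk (v ^ p ^ N) ∈ W := by
      apply hsub
      apply hballK
      rw [Metric.mem_ball, dist_eq_norm]
      calc ‖((v ^ p ^ N : Kˣ) : K) - 1‖ ≤ c ^ N * c := hvpow N
        _ ≤ c ^ N * 1 := mul_le_mul_of_nonneg_left hc.le (pow_nonneg h0c N)
        _ = c ^ N := mul_one _
        _ < ε := hN
    simpa [hfdef, hFx] using hmemW
  · intro x xt hxt
    exact huniv x xt hxt
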